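/- Let (X, d) be a finite metric space, let δ ≥ 0, and let x, y ∈ X lie in distinct connected components of the δ-threshold graph of X. Then there exist ε > δ and a nonexpansive map f : X → Λ_ε such that f(x) ≠ f(y). -/

import Mathlib

/-- The `δ`-threshold graph of a metric space: distinct points are adjacent
iff their distance is at most `δ`. -/
def thresholdGraph (X : Type*) [MetricSpace X] (δ : ℝ) : SimpleGraph X where
  Adj x y := x ≠ y ∧ dist x y ≤ δ
  symm := ⟨fun x y h => ⟨h.1.symm, by rw [dist_comm]; exact h.2⟩⟩
  loopless := ⟨fun x h => h.1 rfl⟩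

/-- The distance function of the two-point metric space `Λ_ε` on `Bool`
(`p := false`, `q := true`, `dist p q = ε`). -/
def lambdaDist (ε : ℝ) (a b : Bool) : ℝ := if a = b then 0 else ε

/-- if `x, y` lie in distinct connected components of the `δ`-threshold
graph of a finite metric space `X`, then there are `ε > δ` and a nonexpansive map
`f : X → Λ_ε` with `f x ≠ f y`. -/
theorem separation_map {X : Type*} [MetricSpace X] [Fintype X] [Nonempty X]
    (δ : ℝ) (hδ : 0 ≤ δ) (x y : X)
    (hxy : ¬ (thresholdGraph X δ).Reachable x y) :
    ∃ ε : ℝ, δ < ε ∧ ∃ f : X → Bool,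
      (∀ a b : X, lambdaDist ε (f a) (f b) ≤ dist a b) ∧ f x ≠ f y := by
  classical
  -- key: non-reachable pairs are at distance > δ
  have key : ∀ a b : X, ¬ (thresholdGraph X δ).Reachable a b → δ < dist a b := by
    intro a b h
    by_contra hle
    push_neg at hle
    have hab : a ≠ b := by
      rintro rfl; exact h (SimpleGraph.Reachable.refl a)
    exact h (SimpleGraph.Adj.reachable (G := thresholdGraph X δ) ⟨hab, hle⟩)
  -- the set of "large" distances
  let s : Finset ℝ := (Finset.univ ×ˢ (Finset.univ : Finset X)).image
      (fun p : X × X => dist p.1 p.2) |>.filter (fun r => δ < r)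
  have hxy_mem : dist x y ∈ s := by
    simp only [s, Finset.mem_filter, Finset.mem_image]
    exact ⟨⟨(x, y), by simp, rfl⟩, key x y hxy⟩
  have hs : s.Nonempty := ⟨_, hxy_mem⟩
  refine ⟨s.min' hs, ?_, fun a => decide (¬ (thresholdGraph X δ).Reachable x a), ?_, ?_⟩
  · have := s.min'_mem hs
    simp only [s, Finset.mem_filter] at this
    exact this.2
  · intro a b
    unfold lambdaDist
    split
    · exact dist_nonneg
    · rename_i hne
      have hr : ¬ (thresholdGraph X δ).Reachable a b := by
        intro hab
        apply hne
        by_cases hxa : (thresholdGraph X δ).Reachable x a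
        · simp [hxa, hxa.trans hab]
        · have hxb : ¬ (thresholdGraph X δ).Reachable x b := fun h => hxa (h.trans hab.symm)
          simp [hxa, hxb]
      apply Finset.min'_le
      simp only [s, Finset.mem_filter, Finset.mem_image]
      exact ⟨⟨(a, b), by simp, rfl⟩, key a b hr⟩
  · simp [hxy, SimpleGraph.Reachable.refl]
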